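/- Let b ≥ 2, d ≥ 1, n ≥ 1 be integers with d dividing n + 1, let g = gcd(b, d), and let ω ∈ ℂ be a primitive d-th root of unity. Then in the polynomial ring ℂ[t] one has the identity (1 + t + t^2 + ⋯ + t^(b−1)) · (1 − t^d)^((n+1)/d) · ∏_{i=1}^{n} (1 + ω^i t + (ω^i t)^2 + ⋯ + (ω^i t)^(b−1)) = (1 − t^(bd/g))^(g·(n+1)/d). -/

import Mathlib

open Polynomial Finset

lemma periodF {M : Type*} [CommMonoid M] (F : ℕ → M) (d : ℕ)
    (h : ∀ i, F (i + d) = F i) : ∀ k i, F (d * k + i) = F i := by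
  intro k
  induction k with
  | zero => simp
  | succ k ihk =>
    intro i
    rw [Nat.mul_succ, add_right_comm, h, ihk]

lemma periodA {M : Type*} [CommMonoid M] (F : ℕ → M) (d : ℕ)
    (h : ∀ i, F (i + d) = F i) (m : ℕ) :
    ∏ i ∈ range (d * m), F i = (∏ i ∈ range d, F i) ^ m := by
  induction m with
  | zero => simp
  | succ m ih =>
    rw [Nat.mul_succ, Finset.prod_range_add, ih, pow_succ]
    congr 1
    exact Finset.prod_congr rfl fun i _ => periodF F d h m i

lemma keyC (m : ℕ) (hm : 0 < m) (ζ : ℂ) (hζ : IsPrimitiveRoot ζ m) (y : ℂ) :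
    ∏ i ∈ range m, (y - ζ ^ i) = y ^ m - 1 := by
  have hinj : Set.InjOn (ζ ^ ·) (range m) := hζ.injOn_pow
  have himg : (range m).image (ζ ^ ·) = nthRootsFinset m (1 : ℂ) := by
    apply Finset.eq_of_subset_of_card_le
    · intro x hx
      simp only [mem_image, mem_range] at hx
      obtain ⟨i, hi, rfl⟩ := hx
      exact (mem_nthRootsFinset hm (1 : ℂ)).2
        (by rw [← pow_mul, mul_comm, pow_mul, hζ.pow_eq_one, one_pow])
    · rw [hζ.card_nthRootsFinset, Finset.card_image_of_injOn hinj, card_range]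
  have h1 := congrArg (eval y) (X_pow_sub_one_eq_prod hm hζ)
  rw [← himg, Finset.prod_image hinj] at h1
  simp only [eval_prod, eval_sub, eval_X, eval_C, eval_pow, eval_one] at h1
  exact h1.symm

lemma keyB0 (m : ℕ) (hm : 0 < m) (ζ : ℂ) (hζ : IsPrimitiveRoot ζ m) :
    ∏ i ∈ range m, (1 - C (ζ ^ i) * X) = 1 - (X : Polynomial ℂ) ^ m := by
  apply Polynomial.funext
  intro x
  simp only [eval_prod, eval_sub, eval_one, eval_mul, eval_C, eval_pow, eval_X]
  rcases eq_or_ne x 0 with rfl | hx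
  · simp [hm.ne']
  · have : ∀ i ∈ range m, (1 : ℂ) - ζ ^ i * x = x * (x⁻¹ - ζ ^ i) := by
      intro i _
      field_simp
    rw [Finset.prod_congr rfl this, Finset.prod_mul_distrib, Finset.prod_const,
      keyC m hm ζ hζ, inv_pow]
    field_simp
    rw [Finset.card_range]

lemma keyB (m : ℕ) (hm : 0 < m) (ζ : ℂ) (hζ : IsPrimitiveRoot ζ m) (p : Polynomial ℂ) :
    ∏ i ∈ range m, (1 - C (ζ ^ i) * p) = 1 - p ^ m := by
  have := congrArg (aeval p) (keyB0 m hm ζ hζ)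
  simpa using this

/-- **Theorem (Main Theorem, part c, product form).**
If `b ≥ 2`, `d ≥ 1`, `n ≥ 1`, `d ∣ (n+1)`, `g = gcd(b,d)` and `ω` is a primitive `d`th root
of unity, then `(1 + t + ⋯ + t^(b-1)) · (1 - t^d)^((n+1)/d) ·
  ∏_{i=1}^{n} (1 + ω^i t + ⋯ + (ω^i t)^(b-1)) = (1 - t^(bd/g))^(g·(n+1)/d)` in `ℂ[t]`. -/
theorem stmt_4 (b d n : ℕ) (hb : 2 ≤ b) (hd : 1 ≤ d) (hn : 1 ≤ n) (hdn : d ∣ (n + 1))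
    (g : ℕ) (hg : g = Nat.gcd b d) (ω : ℂ) (hω : IsPrimitiveRoot ω d) :
    (∑ j ∈ Finset.range b, (X : Polynomial ℂ) ^ j) * (1 - X ^ d) ^ ((n + 1) / d) *
      ∏ i ∈ Finset.Icc 1 n, (∑ j ∈ Finset.range b, C ((ω ^ i) ^ j) * X ^ j) =
    (1 - X ^ (b * d / g)) ^ (g * ((n + 1) / d)) := by
  set F : ℕ → Polynomial ℂ := fun i => ∑ j ∈ range b, C ((ω ^ i) ^ j) * X ^ j with hF
  have hg0 : 0 < g := by rw [hg]; exact Nat.gcd_pos_of_pos_left _ (by omega)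
  have hgd : g ∣ d := hg ▸ Nat.gcd_dvd_right b d
  have he0 : 0 < d / g := Nat.div_pos (Nat.le_of_dvd (by omega) hgd) hg0
  set m := (n + 1) / d with hm
  have hdm : d * m = n + 1 := Nat.mul_div_cancel' hdn
  have hF0 : (∑ j ∈ range b, (X : Polynomial ℂ) ^ j) = F 0 := by
    simp [hF]
  have hFper : ∀ i, F (i + d) = F i := by
    intro i
    simp only [hF, pow_add, hω.pow_eq_one, mul_one]
  have hprod : F 0 * ∏ i ∈ Finset.Icc 1 n, F i = (∏ i ∈ range d, F i) ^ m := by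
    have hIcc : ∏ i ∈ Finset.Icc 1 n, F i = ∏ i ∈ range n, F (i + 1) := by
      rw [← Finset.Ico_add_one_right_eq_Icc, Finset.prod_Ico_eq_prod_range]
      simp [add_comm]
    rw [hIcc, mul_comm, ← Finset.prod_range_succ' F n, ← hdm, periodA F d hFper m]
  -- inner identity
  have hfac : ∀ i, (1 - C (ω ^ i) * X) * F i = 1 - C ((ω ^ b) ^ i) * X ^ b := by
    intro i
    have hFi : F i = ∑ j ∈ range b, (C (ω ^ i) * X) ^ j := by
      refine Finset.sum_congr rfl fun j _ => ?_
      rw [mul_pow, ← map_pow]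
    have hpow : C ((ω ^ b) ^ i) * X ^ b = (C (ω ^ i) * X) ^ b := by
      rw [mul_pow, ← map_pow, ← pow_mul, ← pow_mul, mul_comm i b]
    rw [hFi, hpow]
    linear_combination -geom_sum_mul (C (ω ^ i) * X) b
  have hη : IsPrimitiveRoot (ω ^ b) (d / g) := by
    have h1 := IsPrimitiveRoot.orderOf (ω ^ b)
    rwa [orderOf_pow' ω (by omega : b ≠ 0), ← hω.eq_orderOf, Nat.gcd_comm, ← hg] at h1
  have hinner : (1 - (X : Polynomial ℂ) ^ d) * ∏ i ∈ range d, F i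
      = (1 - X ^ (b * d / g)) ^ g := by
    have hrange : range d = range ((d / g) * g) := by rw [Nat.div_mul_cancel hgd]
    rw [← keyB0 d hd ω hω, ← Finset.prod_mul_distrib,
      Finset.prod_congr rfl (fun i _ => hfac i), hrange,
      periodA (fun i => 1 - C ((ω ^ b) ^ i) * X ^ b) (d / g)
        (fun i => by simp [pow_add, hη.pow_eq_one]) g,
      keyB (d / g) he0 (ω ^ b) hη (X ^ b), ← pow_mul, ← Nat.mul_div_assoc b hgd]
  calc (∑ j ∈ range b, (X : Polynomial ℂ) ^ j) * (1 - X ^ d) ^ m *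
        ∏ i ∈ Finset.Icc 1 n, F i
      = (1 - X ^ d) ^ m * (F 0 * ∏ i ∈ Finset.Icc 1 n, F i) := by rw [hF0]; ring
    _ = (1 - X ^ d) ^ m * (∏ i ∈ range d, F i) ^ m := by rw [hprod]
    _ = ((1 - X ^ d) * ∏ i ∈ range d, F i) ^ m := (mul_pow _ _ _).symm
    _ = ((1 - X ^ (b * d / g)) ^ g) ^ m := by rw [hinner]
    _ = (1 - X ^ (b * d / g)) ^ (g * m) := by rw [← pow_mul]
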